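/- Let a > 0, ν > 0, L₁, L₂ > 0 with e^{−a(L₁+L₂)/ν} < 1/2, and let λ± ∈ ℂ satisfy Re λ₊ > 0, Re λ₋ < 0, |λ₋| ≤ |λ₊|, Re(λ₊ − λ₋) ≥ a/ν, |λ₊| ≥ a/ν. Then for every x ∈ [−L₁, L₂], | (e^{λ₊(x+L₁)} − e^{λ₋(x+L₁)}) / (ν λ₊² e^{λ₊(L₂+L₁)} − ν λ₋² e^{λ₋(L₂+L₁)}) | ≤ (4ν/a²) e^{Re λ₊ (x − L₂)}. -/

import Mathlib

open Complex

private lemma aux_den (c P M Ep Em Eq : ℝ) (hc : 0 < c) (hP : c ≤ P) (hEp : 0 < Ep)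
    (hBle : M * Em ≤ P * Ep * Eq) (hEq : Eq < 1 / 2) :
    c * Ep * (1 / 2) ≤ P * Ep - M * Em := by
  have h1 : P * Ep * (1 / 2) ≤ P * Ep * (1 - Eq) :=
    mul_le_mul_of_nonneg_left (by linarith) (mul_nonneg (by linarith) hEp.le)
  have h2 : c * Ep ≤ P * Ep := mul_le_mul_of_nonneg_right hP hEp.le
  have h3 : P * Ep * (1 - Eq) = P * Ep - P * Ep * Eq := by ring
  nlinarith

/-- Pointwise multiplier bound at the heart of Lemma 3.2:
`|(e^{λ₊(x+L₁)} − e^{λ₋(x+L₁)})/(νλ₊²e^{λ₊(L₂+L₁)} − νλ₋²e^{λ₋(L₂+L₁)})|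
  ≤ (4ν/a²) e^{Re λ₊ (x−L₂)}`. -/
theorem pointwise_multiplier_bound (a ν L₁ L₂ : ℝ) (lamP lamM : ℂ)
    (ha : 0 < a) (hν : 0 < ν) (hL₁ : 0 < L₁) (hL₂ : 0 < L₂)
    (hsmall : Real.exp (-a * (L₁ + L₂) / ν) < 1 / 2)
    (hrePpos : 0 < lamP.re) (hreMneg : lamM.re < 0)
    (habs : ‖lamM‖ ≤ ‖lamP‖)
    (hgap : a / ν ≤ (lamP - lamM).re)
    (habsP : a / ν ≤ ‖lamP‖) :
    ∀ x ∈ Set.Icc (-L₁) L₂,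
      ‖(Complex.exp (lamP * ((x : ℂ) + L₁)) -
          Complex.exp (lamM * ((x : ℂ) + L₁))) /
        ((ν : ℂ) * lamP ^ 2 * Complex.exp (lamP * ((L₂ : ℂ) + L₁)) -
          (ν : ℂ) * lamM ^ 2 * Complex.exp (lamM * ((L₂ : ℂ) + L₁)))‖ ≤
      4 * ν / a ^ 2 * Real.exp (lamP.re * (x - L₂)) := by
  rintro x ⟨hx1, hx2⟩
  set p := lamP.re with hp
  set m := lamM.re with hm
  have ht : 0 ≤ x + L₁ := by linarith
  have hS : 0 < L₂ + L₁ := by linarith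
  have hmp : m < p := lt_trans hreMneg hrePpos
  -- real parts of exponents
  have hre1 : (lamP * ((x : ℂ) + L₁)).re = p * (x + L₁) := by
    simp [Complex.mul_re, hp]
  have hre2 : (lamM * ((x : ℂ) + L₁)).re = m * (x + L₁) := by
    simp [Complex.mul_re, hm]
  have hre3 : (lamP * ((L₂ : ℂ) + L₁)).re = p * (L₂ + L₁) := by
    simp [Complex.mul_re, hp]
  have hre4 : (lamM * ((L₂ : ℂ) + L₁)).re = m * (L₂ + L₁) := by
    simp [Complex.mul_re, hm]
  -- numerator bound
  have hNum : ‖Complex.exp (lamP * ((x : ℂ) + L₁)) -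
      Complex.exp (lamM * ((x : ℂ) + L₁))‖ ≤ 2 * Real.exp (p * (x + L₁)) := by
    have h1 : ‖Complex.exp (lamP * ((x : ℂ) + L₁))‖ = Real.exp (p * (x + L₁)) := by
      rw [Complex.norm_exp, hre1]
    have h2 : ‖Complex.exp (lamM * ((x : ℂ) + L₁))‖ = Real.exp (m * (x + L₁)) := by
      rw [Complex.norm_exp, hre2]
    have h3 : Real.exp (m * (x + L₁)) ≤ Real.exp (p * (x + L₁)) :=
      Real.exp_le_exp.mpr (by nlinarith)
    calc ‖Complex.exp (lamP * ((x : ℂ) + L₁)) -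
          Complex.exp (lamM * ((x : ℂ) + L₁))‖
        ≤ ‖Complex.exp (lamP * ((x : ℂ) + L₁))‖ +
          ‖Complex.exp (lamM * ((x : ℂ) + L₁))‖ :=
        norm_sub_le _ _
      _ ≤ 2 * Real.exp (p * (x + L₁)) := by rw [h1, h2]; linarith
  -- denominator bound
  have hexpSmall : Real.exp (-(a / ν) * (L₂ + L₁)) < 1 / 2 := by
    have : -(a / ν) * (L₂ + L₁) = -a * (L₁ + L₂) / ν := by ring
    rwa [this]
  have habsP2 : (a / ν) ^ 2 ≤ (‖lamP‖) ^ 2 := by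
    have h0 : (0:ℝ) ≤ a / ν := le_of_lt (div_pos ha hν)
    nlinarith
  have hA : ‖(ν : ℂ) * lamP ^ 2 * Complex.exp (lamP * ((L₂ : ℂ) + L₁))‖
      = ν * (‖lamP‖) ^ 2 * Real.exp (p * (L₂ + L₁)) := by
    rw [norm_mul, norm_mul, norm_pow, Complex.norm_exp, hre3, Complex.norm_real,
      Real.norm_of_nonneg hν.le]
  have hB : ‖(ν : ℂ) * lamM ^ 2 * Complex.exp (lamM * ((L₂ : ℂ) + L₁))‖
      = ν * (‖lamM‖) ^ 2 * Real.exp (m * (L₂ + L₁)) := by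
    rw [norm_mul, norm_mul, norm_pow, Complex.norm_exp, hre4, Complex.norm_real,
      Real.norm_of_nonneg hν.le]
  have hBle : ν * (‖lamM‖) ^ 2 * Real.exp (m * (L₂ + L₁)) ≤
      ν * (‖lamP‖) ^ 2 * Real.exp (p * (L₂ + L₁)) *
        Real.exp (-(a / ν) * (L₂ + L₁)) := by
    have hexp : Real.exp (m * (L₂ + L₁)) ≤
        Real.exp (p * (L₂ + L₁)) * Real.exp (-(a / ν) * (L₂ + L₁)) := by
      rw [← Real.exp_add]
      apply Real.exp_le_exp.mpr
      have : a / ν ≤ p - m := by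
        have := hgap; simpa [Complex.sub_re] using this
      nlinarith [mul_le_mul_of_nonneg_right this (le_of_lt hS)]
    have h1 : (‖lamM‖) ^ 2 ≤ (‖lamP‖) ^ 2 :=
      pow_le_pow_left₀ (norm_nonneg lamM) habs 2
    calc ν * (‖lamM‖) ^ 2 * Real.exp (m * (L₂ + L₁))
        ≤ ν * (‖lamM‖) ^ 2 *
          (Real.exp (p * (L₂ + L₁)) * Real.exp (-(a / ν) * (L₂ + L₁))) := by
          have h0 : (0:ℝ) ≤ ν * (‖lamM‖) ^ 2 := by positivity
          exact mul_le_mul_of_nonneg_left hexp h0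
      _ ≤ ν * (‖lamP‖) ^ 2 *
          (Real.exp (p * (L₂ + L₁)) * Real.exp (-(a / ν) * (L₂ + L₁))) := by
          have h0 : (0:ℝ) ≤ Real.exp (p * (L₂ + L₁)) * Real.exp (-(a / ν) * (L₂ + L₁)) := by
            positivity
          have h2 : ν * (‖lamM‖) ^ 2 ≤ ν * (‖lamP‖) ^ 2 :=
            mul_le_mul_of_nonneg_left h1 (le_of_lt hν)
          exact mul_le_mul_of_nonneg_right h2 h0
      _ = ν * (‖lamP‖) ^ 2 * Real.exp (p * (L₂ + L₁)) *
          Real.exp (-(a / ν) * (L₂ + L₁)) := by ring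
  have hDen : a ^ 2 / (2 * ν) * Real.exp (p * (L₂ + L₁)) ≤
      ‖(ν : ℂ) * lamP ^ 2 * Complex.exp (lamP * ((L₂ : ℂ) + L₁)) -
        (ν : ℂ) * lamM ^ 2 * Complex.exp (lamM * ((L₂ : ℂ) + L₁))‖ := by
    have htri := norm_sub_norm_le
      ((ν : ℂ) * lamP ^ 2 * Complex.exp (lamP * ((L₂ : ℂ) + L₁)))
      ((ν : ℂ) * lamM ^ 2 * Complex.exp (lamM * ((L₂ : ℂ) + L₁)))
    have hPa : a ^ 2 / ν ≤ ν * (‖lamP‖) ^ 2 := by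
      have h0 : ν * (a / ν) ^ 2 = a ^ 2 / ν := by field_simp
      have := mul_le_mul_of_nonneg_left habsP2 hν.le
      linarith
    have hkey := aux_den (a ^ 2 / ν) (ν * (‖lamP‖) ^ 2)
      (ν * (‖lamM‖) ^ 2) (Real.exp (p * (L₂ + L₁)))
      (Real.exp (m * (L₂ + L₁))) (Real.exp (-(a / ν) * (L₂ + L₁)))
      (by positivity) hPa (Real.exp_pos _) hBle hexpSmall
    have h4 : a ^ 2 / ν * Real.exp (p * (L₂ + L₁)) * (1 / 2) =
        a ^ 2 / (2 * ν) * Real.exp (p * (L₂ + L₁)) := by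
      field_simp
    rw [hA, hB] at htri
    linarith
  have hDpos : 0 < a ^ 2 / (2 * ν) * Real.exp (p * (L₂ + L₁)) := by positivity
  rw [norm_div]
  calc ‖Complex.exp (lamP * ((x : ℂ) + L₁)) -
        Complex.exp (lamM * ((x : ℂ) + L₁))‖ /
      ‖(ν : ℂ) * lamP ^ 2 * Complex.exp (lamP * ((L₂ : ℂ) + L₁)) -
        (ν : ℂ) * lamM ^ 2 * Complex.exp (lamM * ((L₂ : ℂ) + L₁))‖
      ≤ (2 * Real.exp (p * (x + L₁))) /
        (a ^ 2 / (2 * ν) * Real.exp (p * (L₂ + L₁))) :=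
      div_le_div₀ (by positivity) hNum hDpos hDen
    _ = 4 * ν / a ^ 2 * Real.exp (p * (x - L₂)) := by
      have : Real.exp (p * (x - L₂)) =
          Real.exp (p * (x + L₁)) / Real.exp (p * (L₂ + L₁)) := by
        rw [← Real.exp_sub]; ring_nf
      rw [this]
      have h1 := Real.exp_pos (p * (L₂ + L₁))
      field_simp
      ring
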